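/- Let l, k ∈ ℝ with l + k ≤ −3/4. If u : (0,∞) → ℂ is differentiable, satisfies (𝒩u)(x̂) = 0 for all x̂ > 0, and satisfies ∫₁^∞ |u(x̂)|²·x̂^{−1} dx̂ < ∞, then u(x̂) = 0 for all x̂ > 0. (Every nonzero solution of the homogeneous model equation is a multiple of x̂^{−l−1/2}(1+x̂)^{−k−1/4}, which fails to be square-integrable against dx̂/x̂ near infinity when l + k + 3/4 ≤ 0.) -/

import Mathlib

open MeasureTheory

/-- The model operator
`(𝒩u)(x̂) = x̂·u'(x̂) + (x̂/(1+x̂))·(k + 1/4)·u(x̂) + (l + 1/2)·u(x̂)`. -/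
noncomputable def modelN (l k : ℝ) (u : ℝ → ℂ) : ℝ → ℂ := fun x =>
  (x : ℂ) * deriv u x + ((x / (1 + x) : ℝ) : ℂ) * ((k : ℂ) + 1 / 4) * u x
    + ((l : ℂ) + 1 / 2) * u x

/-- Below the threshold `l + k ≤ −3/4`, any homogeneous solution of
the model equation that is square-integrable against `dx̂/x̂` near infinity vanishes. -/
theorem stmt8 (l k : ℝ) (hlk : l + k ≤ -(3 / 4)) (u : ℝ → ℂ)
    (hu : ∀ x : ℝ, 0 < x → DifferentiableAt ℝ u x)
    (hode : ∀ x : ℝ, 0 < x → modelN l k u x = 0)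
    (hint : ∫⁻ x in Set.Ioi (1 : ℝ), ENNReal.ofReal (‖u x‖ ^ 2 / x) < ⊤) :
    ∀ x : ℝ, 0 < x → u x = 0 := by
  set φ : ℝ → ℝ := fun x => x ^ (l + 1/2) * (1 + x) ^ (k + 1/4) with hφdef
  set w : ℝ → ℂ := fun x => ((φ x : ℝ) : ℂ) * u x with hwdef
  -- the weight is positive
  have hφpos : ∀ x : ℝ, 0 < x → 0 < φ x := by
    intro x hx
    exact mul_pos (Real.rpow_pos_of_pos hx _)
      (Real.rpow_pos_of_pos (by linarith) _)
  -- w has zero derivative on (0, ∞)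
  have hw0 : ∀ x : ℝ, 0 < x → HasDerivAt w 0 x := by
    intro x hx
    have hx1 : (0:ℝ) < 1 + x := by linarith
    have h1 : HasDerivAt (fun y : ℝ => y ^ (l + 1/2))
        ((l + 1/2) * x ^ (l + 1/2 - 1)) x :=
      Real.hasDerivAt_rpow_const (Or.inl hx.ne')
    have h2 : HasDerivAt (fun y : ℝ => (1 + y) ^ (k + 1/4))
        (1 * (k + 1/4) * (1 + x) ^ (k + 1/4 - 1)) x :=
      (HasDerivAt.const_add 1 (hasDerivAt_id x)).rpow_const (Or.inl hx1.ne')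
    have hφ : HasDerivAt φ
        ((l + 1/2) * x ^ (l + 1/2 - 1) * ((1 + x) ^ (k + 1/4))
          + x ^ (l + 1/2) * (1 * (k + 1/4) * (1 + x) ^ (k + 1/4 - 1))) x := h1.mul h2
    have hw : HasDerivAt w
        ((((l + 1/2) * x ^ (l + 1/2 - 1) * ((1 + x) ^ (k + 1/4))
          + x ^ (l + 1/2) * (1 * (k + 1/4) * (1 + x) ^ (k + 1/4 - 1)) : ℝ) : ℂ) * u x
          + ((φ x : ℝ) : ℂ) * deriv u x) x :=
      hφ.ofReal_comp.mul (hu x hx).hasDerivAt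
    convert hw using 1
    -- show the derivative value vanishes, using the ODE
    have hode' := hode x hx
    simp only [modelN] at hode'
    have hA : x ^ (l + 1/2 - 1) = x ^ (l + 1/2) / x := by
      rw [Real.rpow_sub hx, Real.rpow_one]
    have hB : (1 + x) ^ (k + 1/4 - 1) = (1 + x) ^ (k + 1/4) / (1 + x) := by
      rw [Real.rpow_sub hx1, Real.rpow_one]
    have hxne : (x : ℂ) ≠ 0 := by exact_mod_cast hx.ne'
    have hxinv : (x : ℂ) * (↑x)⁻¹ = 1 := mul_inv_cancel₀ hxne
    rw [hA, hB]
    simp only [hφdef]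
    push_cast at hode' ⊢
    linear_combination (-((↑(x ^ (l + 1/2)) : ℂ) * ↑((1 + x) ^ (k + 1/4)) * (↑x)⁻¹)) * hode'
      + ((↑(x ^ (l + 1/2)) : ℂ) * ↑((1 + x) ^ (k + 1/4))
          * (deriv u x + ((k : ℂ) + 1/4) * ((1 + (x : ℂ))⁻¹) * u x)) * hxinv
  -- w is constant on (0, ∞)
  have hwconst : ∀ x : ℝ, 0 < x → w x = w 1 := by
    intro x hx
    rcases le_total x 1 with h | h
    · have hcont : ContinuousOn w (Set.Icc x 1) := fun y hy =>
        ((hw0 y (lt_of_lt_of_le hx hy.1)).continuousAt).continuousWithinAt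
      have := constant_of_has_deriv_right_zero hcont
        (fun y hy => (hw0 y (lt_of_lt_of_le hx hy.1)).hasDerivWithinAt)
      exact (this 1 ⟨h, le_refl 1⟩).symm
    · have hcont : ContinuousOn w (Set.Icc 1 x) := fun y hy =>
        ((hw0 y (lt_of_lt_of_le one_pos hy.1)).continuousAt).continuousWithinAt
      have := constant_of_has_deriv_right_zero hcont
        (fun y hy => (hw0 y (lt_of_lt_of_le one_pos hy.1)).hasDerivWithinAt)
      exact this x ⟨h, le_refl x⟩
  set c : ℂ := w 1 with hcdef
  by_cases hc : c = 0
  · intro x hx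
    have hwx := hwconst x hx
    rw [hc] at hwx
    have hφne : ((φ x : ℝ) : ℂ) ≠ 0 := by
      exact_mod_cast (hφpos x hx).ne'
    simpa [hwdef, hφne] using hwx
  · exfalso
    -- On (1, ∞) the weight is bounded above, so ‖u‖²/x ≳ 1/x, contradicting integrability
    set C : ℝ := 2 ^ |k + 1/4| with hCdef
    have hC1 : (1:ℝ) ≤ C := Real.one_le_rpow one_le_two (abs_nonneg _)
    have hC0 : (0:ℝ) < C := lt_of_lt_of_le one_pos hC1
    have hφle : ∀ x : ℝ, 1 < x → φ x ≤ C := by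
      intro x hx
      have hx0 : (0:ℝ) < x := lt_trans one_pos hx
      have hb : (1 + x) ^ (k + 1/4) ≤ C * x ^ (k + 1/4) := by
        rcases le_or_gt 0 (k + 1/4) with hp | hp
        · have h1 : (1 + x) ^ (k + 1/4) ≤ (2 * x) ^ (k + 1/4) :=
            Real.rpow_le_rpow (by linarith) (by linarith) hp
          rw [Real.mul_rpow (by norm_num) hx0.le] at h1
          calc (1 + x) ^ (k + 1/4) ≤ 2 ^ (k + 1/4) * x ^ (k + 1/4) := h1
            _ ≤ C * x ^ (k + 1/4) := by
                have : (2:ℝ) ^ (k + 1/4) ≤ C := by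
                  rw [hCdef, abs_of_nonneg hp]
                exact mul_le_mul_of_nonneg_right this (Real.rpow_nonneg hx0.le _)
        · have h1 : (1 + x) ^ (k + 1/4) ≤ x ^ (k + 1/4) :=
            Real.rpow_le_rpow_of_nonpos hx0 (by linarith) hp.le
          calc (1 + x) ^ (k + 1/4) ≤ x ^ (k + 1/4) := h1
            _ ≤ C * x ^ (k + 1/4) := by
                nlinarith [Real.rpow_nonneg hx0.le (k + 1/4)]
      have hmul : φ x ≤ x ^ (l + 1/2) * (C * x ^ (k + 1/4)) :=
        mul_le_mul_of_nonneg_left hb (Real.rpow_nonneg hx0.le _)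
      have heq : x ^ (l + 1/2) * (C * x ^ (k + 1/4)) = C * x ^ (l + 1/2 + (k + 1/4)) := by
        rw [Real.rpow_add hx0 (l + 1/2) (k + 1/4)]; ring
      have hle1 : x ^ (l + 1/2 + (k + 1/4)) ≤ 1 :=
        Real.rpow_le_one_of_one_le_of_nonpos hx.le (by linarith)
      calc φ x ≤ C * x ^ (l + 1/2 + (k + 1/4)) := by rw [← heq]; exact hmul
        _ ≤ C * 1 := mul_le_mul_of_nonneg_left hle1 hC0.le
        _ = C := mul_one C
    set ε : ℝ := ‖c‖ ^ 2 / C ^ 2 with hεdef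
    have hεpos : 0 < ε := by
      exact div_pos (pow_pos (norm_pos_iff.mpr hc) 2) (pow_pos hC0 2)
    -- pointwise lower bound on (1, ∞)
    have hlb : ∀ x ∈ Set.Ioi (1:ℝ), ENNReal.ofReal (ε * x⁻¹) ≤ ENNReal.ofReal (‖u x‖ ^ 2 / x) := by
      intro x hx
      have hx1 : (1:ℝ) < x := hx
      have hx0 : (0:ℝ) < x := lt_trans one_pos hx1
      apply ENNReal.ofReal_le_ofReal
      have hux : ((φ x : ℝ) : ℂ) * u x = c := hwconst x hx0
      have hnorm : φ x * ‖u x‖ = ‖c‖ := by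
        rw [← hux, norm_mul, Complex.norm_real, Real.norm_of_nonneg (hφpos x hx0).le]
      have hφx := hφpos x hx0
      have hule : ‖c‖ ≤ C * ‖u x‖ := by
        rw [← hnorm]
        exact mul_le_mul_of_nonneg_right (hφle x hx1) (norm_nonneg _)
      have h2 : ε ≤ ‖u x‖ ^ 2 := by
        rw [hεdef, div_le_iff₀ (by positivity)]
        nlinarith [norm_nonneg (u x), norm_nonneg c, hule, hC0]
      rw [div_eq_mul_inv]
      exact mul_le_mul_of_nonneg_right h2 (inv_nonneg.2 hx0.le)
    have hmono : ∫⁻ x in Set.Ioi (1:ℝ), ENNReal.ofReal (ε * x⁻¹)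
        ≤ ∫⁻ x in Set.Ioi (1:ℝ), ENNReal.ofReal (‖u x‖ ^ 2 / x) :=
      setLIntegral_mono' measurableSet_Ioi hlb
    have hfin : ∫⁻ x in Set.Ioi (1:ℝ), ENNReal.ofReal (ε * x⁻¹) < ⊤ :=
      lt_of_le_of_lt hmono hint
    -- hence ε * x⁻¹ is integrable on (1, ∞)
    have hintg : IntegrableOn (fun x : ℝ => ε * x⁻¹) (Set.Ioi (1:ℝ)) := by
      constructor
      · exact (measurable_const.mul measurable_inv).aestronglyMeasurable
      · rw [hasFiniteIntegral_iff_ofReal]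
        · exact hfin
        · filter_upwards [ae_restrict_mem measurableSet_Ioi] with x hx
          have hx0 : (0:ℝ) < x := lt_trans one_pos hx
          positivity
    have hintg2 : IntegrableOn (fun x : ℝ => x⁻¹) (Set.Ioi (1:ℝ)) := by
      have := hintg.const_mul ε⁻¹
      have h2 : Integrable (fun x : ℝ => x⁻¹) (volume.restrict (Set.Ioi (1:ℝ))) := by
        simpa [← mul_assoc, inv_mul_cancel₀ hεpos.ne'] using this
      exact h2
    have hnot : ¬ IntegrableOn (fun x : ℝ => x ^ (-1 : ℝ)) (Set.Ioi (1:ℝ)) := by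
      rw [integrableOn_Ioi_rpow_iff one_pos]
      norm_num
    apply hnot
    refine hintg2.congr_fun (fun x hx => ?_) measurableSet_Ioi
    rw [Real.rpow_neg_one]
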